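/- arXiv:1307.2975 — 2 statements merged into one kernel-verified Lean document; each statement's English description precedes it below -/
import Mathlib

section
/- Let n ≥ 1, let z₁,…,z_n ∈ ℂ be distinct with Im z_k > 0 for each k, and let r₁,…,r_n, s₁,…,s_n ∈ ℂ² satisfy both the linear system (L1) and the linear system (L2). Then for each k = 1,…,n one has the exchange identity Σ_{m=1}^n ⟨r_m, s_k⟩ s_m = Σ_{j=1}^n ⟨s_j, s_k⟩ r_j. -/
open MeasureTheory Matrix ENNReal Filter

noncomputable section

/-- The Pauli matrix `σ₃ = diag(1, -1)`. -/
def sigma3 : Matrix (Fin 2) (Fin 2) ℂ := !![1, 0; 0, -1]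

/-- `Q(w)` : the off-diagonal matrix with `(1,2)`-entry `w` and `(2,1)`-entry `-conj w`. -/
def Qm (w : ℂ) : Matrix (Fin 2) (Fin 2) ℂ := !![0, w; -(starRingEnd ℂ w), 0]

/-- The Hermitian inner product `⟨u,v⟩ = conj u₁ * v₁ + conj u₂ * v₂` on `ℂ²`. -/
def inn (u v : Fin 2 → ℂ) : ℂ := starRingEnd ℂ (u 0) * v 0 + starRingEnd ℂ (u 1) * v 1

/-- The outer product `u ⊗ conj v`. -/
def outer (u v : Fin 2 → ℂ) : Matrix (Fin 2) (Fin 2) ℂ :=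
  Matrix.of fun a b => u a * starRingEnd ℂ (v b)

/-- The Gramian matrix `M_{k,j} = -i ⟨s_j, s_k⟩ / (conj z_k - z_j)`. -/
def gram {n : ℕ} (z : Fin n → ℂ) (s : Fin n → Fin 2 → ℂ) : Matrix (Fin n) (Fin n) ℂ :=
  Matrix.of fun k j => -Complex.I * inn (s j) (s k) / (starRingEnd ℂ (z k) - z j)

/-- The `(j,k)`-cofactor `D_{j,k}` of a square matrix. -/
def cof {n : ℕ} (A : Matrix (Fin n) (Fin n) ℂ) (j k : Fin n) : ℂ := A.adjugate k j

/-- The linear system (L1): `i s_k = ∑_j (⟨s_j,s_k⟩/(conj z_k - z_j)) r_j`. -/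
def L1sys {n : ℕ} (z : Fin n → ℂ) (s r : Fin n → Fin 2 → ℂ) : Prop :=
  ∀ k, Complex.I • s k = ∑ j, (inn (s j) (s k) / (starRingEnd ℂ (z k) - z j)) • r j

/-- The linear system (L2): `i r_k = ∑_j (⟨r_j,r_k⟩/(conj z_j - z_k)) s_j`. -/
def L2sys {n : ℕ} (z : Fin n → ℂ) (s r : Fin n → Fin 2 → ℂ) : Prop :=
  ∀ k, Complex.I • r k = ∑ j, (inn (r j) (r k) / (starRingEnd ℂ (z j) - z k)) • s j

/-- A classical solution of the cubic NLS equation `i q_t + q_xx + 2 |q|² q = 0`;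
functions of `(x, t)` are encoded as `q : ℝ → ℝ → ℂ`, `x` first. -/
def IsClassicalNLS (q : ℝ → ℝ → ℂ) : Prop :=
  (∀ t, ContDiff ℝ 2 fun x => q x t) ∧ (∀ x, ContDiff ℝ 1 fun t => q x t) ∧
    ∀ x t, Complex.I * deriv (fun τ => q x τ) t + deriv (deriv fun y => q y t) x
      + 2 * (‖q x t‖ : ℂ) ^ 2 * q x t = 0

/-- The `x`-part Lax matrix `U = -i z σ₃ + Q(w)`. -/
def Ux (z w : ℂ) : Matrix (Fin 2) (Fin 2) ℂ := (-(Complex.I * z)) • sigma3 + Qm w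

/-- The `t`-part Lax matrix `V = i(|w|² - 2z²) σ₃ + 2 z Q(w) - i Q(w_x) σ₃`. -/
def Vt (z w wx : ℂ) : Matrix (Fin 2) (Fin 2) ℂ :=
  (Complex.I * ((‖w‖ : ℂ) ^ 2 - 2 * z ^ 2)) • sigma3 + (2 * z) • Qm w
    - Complex.I • (Qm wx * sigma3)

/-- The dressed potential `q = q₀ - (2/D) ∑_{k,j} D_{j,k} s_{j,1} conj (s_{k,2})` (pointwise). -/
def dressQ {n : ℕ} (z : Fin n → ℂ) (q0 : ℂ) (s : Fin n → Fin 2 → ℂ) : ℂ :=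
  q0 - 2 / (gram z s).det *
    ∑ k, ∑ j, cof (gram z s) j k * s j 0 * starRingEnd ℂ (s k 1)

/-- `Σ^S` of the 2-soliton, as a function of the phases `φ₁, φ₂, ψ₁, ψ₂`. -/
def SigmaSof (η₁ η₂ ξ₁ ξ₂ φ₁ φ₂ ψ₁ ψ₂ : ℝ) : ℂ :=
  (Complex.exp (-2*(η₂:ℂ)*(φ₂:ℂ) + 2*Complex.I*(ψ₁:ℂ)) +
      Complex.exp (2*(η₂:ℂ)*(φ₂:ℂ) + 2*Complex.I*(ψ₁:ℂ))) / (2*(η₂:ℂ))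
  + (Complex.exp (-2*(η₁:ℂ)*(φ₁:ℂ) + 2*Complex.I*(ψ₂:ℂ)) +
      Complex.exp (2*(η₁:ℂ)*(φ₁:ℂ) + 2*Complex.I*(ψ₂:ℂ))) / (2*(η₁:ℂ))
  - (Complex.exp (-2*(η₂:ℂ)*(φ₂:ℂ) + 2*Complex.I*(ψ₁:ℂ)) +
      Complex.exp (2*(η₁:ℂ)*(φ₁:ℂ) + 2*Complex.I*(ψ₂:ℂ))) /
        ((η₁:ℂ) + (η₂:ℂ) + Complex.I*((ξ₁:ℂ) - (ξ₂:ℂ)))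
  - (Complex.exp (-2*(η₁:ℂ)*(φ₁:ℂ) + 2*Complex.I*(ψ₂:ℂ)) +
      Complex.exp (2*(η₂:ℂ)*(φ₂:ℂ) + 2*Complex.I*(ψ₁:ℂ))) /
        ((η₁:ℂ) + (η₂:ℂ) - Complex.I*((ξ₁:ℂ) - (ξ₂:ℂ)))

/-- `D^S` of the 2-soliton, as a function of the phases `φ₁, φ₂, ψ₁, ψ₂`. -/
def DSof (η₁ η₂ ξ₁ ξ₂ φ₁ φ₂ ψ₁ ψ₂ : ℝ) : ℂ :=
  (Complex.exp (-2*(η₁:ℂ)*(φ₁:ℂ)) + Complex.exp (2*(η₁:ℂ)*(φ₁:ℂ))) *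
      (Complex.exp (-2*(η₂:ℂ)*(φ₂:ℂ)) + Complex.exp (2*(η₂:ℂ)*(φ₂:ℂ))) / (4*(η₁:ℂ)*(η₂:ℂ))
  - (Complex.exp (-(η₁:ℂ)*(φ₁:ℂ) - (η₂:ℂ)*(φ₂:ℂ) + Complex.I*((ψ₁:ℂ) - (ψ₂:ℂ))) +
      Complex.exp ((η₁:ℂ)*(φ₁:ℂ) + (η₂:ℂ)*(φ₂:ℂ) - Complex.I*((ψ₁:ℂ) - (ψ₂:ℂ)))) *
    (Complex.exp (-(η₁:ℂ)*(φ₁:ℂ) - (η₂:ℂ)*(φ₂:ℂ) - Complex.I*((ψ₁:ℂ) - (ψ₂:ℂ))) +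
      Complex.exp ((η₁:ℂ)*(φ₁:ℂ) + (η₂:ℂ)*(φ₂:ℂ) + Complex.I*((ψ₁:ℂ) - (ψ₂:ℂ)))) /
    (((η₁:ℂ) + (η₂:ℂ))^2 + ((ξ₁:ℂ) - (ξ₂:ℂ))^2)

/-- The phase `φ = x + 4 ξ t - x_c`. -/
def phiSol (ξ xc x t : ℝ) : ℝ := x + 4*ξ*t - xc

/-- The phase `ψ = θ - ξ (x + 2 ξ t - x_c) + 2 η² t`. -/
def psiSol (θ ξ xc η x t : ℝ) : ℝ := θ - ξ*(x + 2*ξ*t - xc) + 2*η^2*t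

/-- `D^S(x,t)` for the 2-soliton with parameters `η₁, η₂, ξ₁, ξ₂, x₁, x₂, θ₁, θ₂`. -/
def twoSolitonD (η₁ η₂ ξ₁ ξ₂ x₁ x₂ θ₁ θ₂ x t : ℝ) : ℂ :=
  DSof η₁ η₂ ξ₁ ξ₂ (phiSol ξ₁ x₁ x t) (phiSol ξ₂ x₂ x t)
    (psiSol θ₁ ξ₁ x₁ η₁ x t) (psiSol θ₂ ξ₂ x₂ η₂ x t)

/-- `Σ^S(x,t)` for the 2-soliton. -/
def twoSolitonSigma (η₁ η₂ ξ₁ ξ₂ x₁ x₂ θ₁ θ₂ x t : ℝ) : ℂ :=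
  SigmaSof η₁ η₂ ξ₁ ξ₂ (phiSol ξ₁ x₁ x t) (phiSol ξ₂ x₂ x t)
    (psiSol θ₁ ξ₁ x₁ η₁ x t) (psiSol θ₂ ξ₂ x₂ η₂ x t)

/-- The 2-soliton `q^S = 2 Σ^S / D^S`. -/
def twoSoliton (η₁ η₂ ξ₁ ξ₂ x₁ x₂ θ₁ θ₂ x t : ℝ) : ℂ :=
  2 * twoSolitonSigma η₁ η₂ ξ₁ ξ₂ x₁ x₂ θ₁ θ₂ x t / twoSolitonD η₁ η₂ ξ₁ ξ₂ x₁ x₂ θ₁ θ₂ x t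

/-- The separable (Jost-type) form
`s = e^{-i conj z (x - x_j) - 2 i conj z² t + i θ_j} f - e^{i conj z (x - x_j) + 2 i conj z² t - i θ_j} g`. -/
def jost (zj : ℂ) (xj θj : ℝ) (f g : ℝ → ℝ → Fin 2 → ℂ) (x t : ℝ) : Fin 2 → ℂ :=
  Complex.exp (-(Complex.I) * starRingEnd ℂ zj * ((x:ℂ) - (xj:ℂ))
      - 2*Complex.I*(starRingEnd ℂ zj)^2*(t:ℂ) + Complex.I*(θj:ℂ)) • f x t
  - Complex.exp (Complex.I * starRingEnd ℂ zj * ((x:ℂ) - (xj:ℂ))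
      + 2*Complex.I*(starRingEnd ℂ zj)^2*(t:ℂ) - Complex.I*(θj:ℂ)) • g x t

/-- The pair of eigenvalues `z_j = ξ_j + i η_j`, `j = 1, 2`. -/
def zvec (ξ₁ η₁ ξ₂ η₂ : ℝ) : Fin 2 → ℂ :=
  ![(ξ₁:ℂ) + (η₁:ℂ)*Complex.I, (ξ₂:ℂ) + (η₂:ℂ)*Complex.I]

/-- The two vector functions `s₁, s₂` in separable form. -/
def sJ (ξ₁ η₁ ξ₂ η₂ x₁ x₂ θ₁ θ₂ : ℝ) (f g : Fin 2 → ℝ → ℝ → Fin 2 → ℂ) (j : Fin 2)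
    (x t : ℝ) : Fin 2 → ℂ :=
  jost (zvec ξ₁ η₁ ξ₂ η₂ j) (![x₁, x₂] j) (![θ₁, θ₂] j) (f j) (g j) x t

/-- The explicit vector solutions used to build the `n`-soliton from `q₀ = 0`. -/
def solS {n : ℕ} (z : Fin n → ℂ) (xs θ : Fin n → ℝ) (j : Fin n) (x t : ℝ) : Fin 2 → ℂ :=
  ![Complex.exp (-(Complex.I) * starRingEnd ℂ (z j) * ((x:ℂ) - ((xs j : ℝ):ℂ))
      - 2*Complex.I*(starRingEnd ℂ (z j))^2*(t:ℂ) + Complex.I*((θ j : ℝ):ℂ)),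
    -Complex.exp (Complex.I * starRingEnd ℂ (z j) * ((x:ℂ) - ((xs j : ℝ):ℂ))
      + 2*Complex.I*(starRingEnd ℂ (z j))^2*(t:ℂ) - Complex.I*((θ j : ℝ):ℂ))]

/-- The `n`-soliton with parameters `{ξ_j, η_j, x_j, θ_j}`. -/
def nSoliton {n : ℕ} (ξ η xs θ : Fin n → ℝ) (x t : ℝ) : ℂ :=
  dressQ (fun j => (ξ j : ℂ) + (η j : ℂ)*Complex.I) 0
    (fun j => solS (fun j => (ξ j : ℂ) + (η j : ℂ)*Complex.I) xs θ j x t)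

lemma inn_sum (u v : Fin 2 → ℂ) : inn u v = ∑ a, starRingEnd ℂ (u a) * v a := by
  simp [inn, Fin.sum_univ_two]

lemma conj_inn (u v : Fin 2 → ℂ) : starRingEnd ℂ (inn u v) = inn v u := by
  simp [inn]; ring

/-- The exchange identity `∑_m ⟨r_m, s_k⟩ s_m = ∑_j ⟨s_j, s_k⟩ r_j`, given (L1) and (L2). -/
theorem stmt_3 (n : ℕ) (hn : 1 ≤ n) (z : Fin n → ℂ) (hz : Function.Injective z)
    (him : ∀ k, 0 < (z k).im) (r s : Fin n → Fin 2 → ℂ)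
    (hL1 : L1sys z s r) (hL2 : L2sys z s r) :
    ∀ k, ∑ m, inn (r m) (s k) • s m = ∑ j, inn (s j) (s k) • r j := by
  intro k
  have hL2c : ∀ j (a : Fin 2), Complex.I * r j a
      = ∑ m, (inn (r m) (r j) / (starRingEnd ℂ (z m) - z j)) * s m a := by
    intro j a
    simpa [Finset.sum_apply, smul_eq_mul] using congrFun (hL2 j) a
  have key : ∀ m, inn (r m) (s k) =
      Complex.I * ∑ j, (inn (r m) (r j) / (z j - starRingEnd ℂ (z m))) * inn (s j) (s k) := by
    intro m
    have hconj : ∀ a : Fin 2, starRingEnd ℂ (r m a) =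
        Complex.I * ∑ j, (inn (r m) (r j) / (z j - starRingEnd ℂ (z m)))
          * starRingEnd ℂ (s j a) := by
      intro a
      have h2 := congrArg (starRingEnd ℂ) (hL2c m a)
      simp only [_root_.map_mul, map_sum, map_div₀, map_sub, Complex.conj_I, conj_inn,
        Complex.conj_conj] at h2
      linear_combination Complex.I * h2 + starRingEnd ℂ (r m a) * Complex.I_sq
    calc inn (r m) (s k) = ∑ a, starRingEnd ℂ (r m a) * s k a := inn_sum _ _
      _ = ∑ a, (Complex.I * ∑ j, (inn (r m) (r j) / (z j - starRingEnd ℂ (z m)))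
            * starRingEnd ℂ (s j a)) * s k a :=
          Finset.sum_congr rfl fun a _ => by rw [hconj]
      _ = Complex.I * ∑ j, (inn (r m) (r j) / (z j - starRingEnd ℂ (z m)))
            * inn (s j) (s k) := by
          simp only [inn_sum, Finset.mul_sum, Finset.sum_mul]
          rw [Finset.sum_comm]
          exact Finset.sum_congr rfl fun j _ => Finset.sum_congr rfl fun a _ => by ring
  funext a
  simp only [Finset.sum_apply, Pi.smul_apply, smul_eq_mul]
  calc ∑ m, inn (r m) (s k) * s m a
      = ∑ m, (Complex.I * ∑ j, (inn (r m) (r j) / (z j - starRingEnd ℂ (z m)))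
          * inn (s j) (s k)) * s m a :=
        Finset.sum_congr rfl fun m _ => by rw [key m]
    _ = ∑ j, inn (s j) (s k) *
          (Complex.I * ∑ m, (inn (r m) (r j) / (z j - starRingEnd ℂ (z m))) * s m a) := by
        simp only [Finset.mul_sum, Finset.sum_mul]
        rw [Finset.sum_comm]
        exact Finset.sum_congr rfl fun j _ => Finset.sum_congr rfl fun m _ => by ring
    _ = ∑ j, inn (s j) (s k) * r j a := by
        refine Finset.sum_congr rfl fun j _ => ?_
        congr 1
        have hsum : ∑ m, (inn (r m) (r j) / (z j - starRingEnd ℂ (z m))) * s m a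
            = -(Complex.I * r j a) := by
          rw [hL2c j a, ← Finset.sum_neg_distrib]
          refine Finset.sum_congr rfl fun m _ => ?_
          rw [show z j - starRingEnd ℂ (z m) = -(starRingEnd ℂ (z m) - z j) by ring, div_neg]
          ring
        rw [hsum]
        linear_combination (-(r j a)) * Complex.I_sq
end
end

section
/- Let q₀ : ℝ → ℂ be continuous and let z₁,…,z_n ∈ ℂ be distinct with Im z_k > 0. Suppose s₁,…,s_n : ℝ → ℂ² are differentiable solutions of s_k′(x) = −i conj(z_k) σ₃ s_k(x) + Q(q₀(x)) s_k(x), the Gramian matrix M(x) is invertible for every x, r_k(x) is the unique solution of the linear system (L1), and q(x) := q₀(x) − (2/D(x)) Σ_{k,j=1}^n D_{j,k}(x) s_{j,1}(x) conj(s_{k,2}(x)). Let z ∈ ℂ with z ∉ {z₁,…,z_n, conj(z₁),…,conj(z_n)}, and let φ₀ : ℝ → M₂(ℂ) be differentiable with φ₀′(x) = (−i z σ₃ + Q(q₀(x))) φ₀(x). Define χ(x) := I + Σ_{k=1}^n i (r_k(x) ⊗ conj(s_k(x)))/(z − z_k) and φ(x) := χ(x) φ₀(x). Then φ is differentiable and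 φ′(x) = (−i z σ₃ + Q(q(x))) φ(x) for all x ∈ ℝ. -/
open MeasureTheory Matrix ENNReal Filter

noncomputable section

lemma diffAt_det' {m : ℕ} {A : ℝ → Matrix (Fin m) (Fin m) ℂ} {x : ℝ}
    (h : ∀ i j, DifferentiableAt ℝ (fun y => A y i j) x) :
    DifferentiableAt ℝ (fun y => (A y).det) x := by
  simp only [Matrix.det_apply']
  exact DifferentiableAt.fun_sum fun σ _ =>
    ((DifferentiableAt.fun_finsetProd fun i _ => h (σ i) i)).const_mul _

lemma diffAt_adj' {m : ℕ} {A : ℝ → Matrix (Fin m) (Fin m) ℂ} {x : ℝ}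
    (h : ∀ i j, DifferentiableAt ℝ (fun y => A y i j) x) (i j : Fin m) :
    DifferentiableAt ℝ (fun y => (A y).adjugate i j) x := by
  simp only [Matrix.adjugate_apply]
  apply diffAt_det'
  intro a b
  simp only [Matrix.updateRow_apply]
  rcases eq_or_ne a j with hab | hab
  · simp [hab]
  · simp only [hab, if_false]; exact h a b

lemma Ux_mulVec' (z w : ℂ) (v : Fin 2 → ℂ) :
    (Ux z w).mulVec v = ![-(Complex.I*z)*v 0 + w*v 1,
      -(starRingEnd ℂ w)*v 0 + Complex.I*z*v 1] := by
  funext a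
  fin_cases a <;>
    simp [Ux, sigma3, Qm, Matrix.mulVec, dotProduct, Fin.sum_univ_two]

lemma Ux_apply' (z w : ℂ) :
    Ux z w = !![-(Complex.I*z), w; -(starRingEnd ℂ w), Complex.I*z] := by
  ext a b
  fin_cases a <;> fin_cases b <;> simp [Ux, sigma3, Qm]

set_option maxHeartbeats 1000000

/-- The dressed matrix `φ = χ φ₀` solves `φ' = (-i z σ₃ + Q(q)) φ` for the dressed
potential `q`. -/
theorem stmt_6 (n : ℕ) (hn : 1 ≤ n) (q₀ : ℝ → ℂ) (hq₀ : Continuous q₀)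
    (z : Fin n → ℂ) (hz : Function.Injective z) (him : ∀ k, 0 < (z k).im)
    (s : Fin n → ℝ → Fin 2 → ℂ)
    (hs : ∀ k x, HasDerivAt (s k) ((Ux (starRingEnd ℂ (z k)) (q₀ x)).mulVec (s k x)) x)
    (hM : ∀ x, IsUnit (gram z fun k => s k x))
    (r : Fin n → ℝ → Fin 2 → ℂ)
    (hr : ∀ x, L1sys z (fun k => s k x) fun k => r k x)
    (q : ℝ → ℂ) (hq : ∀ x, q x = dressQ z (q₀ x) fun k => s k x)
    (w : ℂ) (hw : ∀ k, w ≠ z k ∧ w ≠ starRingEnd ℂ (z k))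
    (φ₀ : ℝ → Matrix (Fin 2) (Fin 2) ℂ)
    (hφ₀ : ∀ x i j, HasDerivAt (fun y => φ₀ y i j) ((Ux w (q₀ x) * φ₀ x) i j) x)
    (φ : ℝ → Matrix (Fin 2) (Fin 2) ℂ)
    (hφdef : ∀ x,
      φ x = (1 + ∑ k, (Complex.I / (w - z k)) • outer (r k x) (s k x)) * φ₀ x) :
    ∀ x i j, HasDerivAt (fun y => φ y i j) ((Ux w (q x) * φ x) i j) x := by
  intro x ii jj
  -- denominators
  have hden : ∀ k j : Fin n, starRingEnd ℂ (z k) - z j ≠ 0 := by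
    intro k j h
    have h1 : (starRingEnd ℂ (z k) - z j).im = 0 := by rw [h]; simp
    have hk := him k; have hj := him j
    simp only [Complex.sub_im, Complex.conj_im] at h1
    linarith
  have hwz : ∀ k, w - z k ≠ 0 := fun k => sub_ne_zero.2 (hw k).1
  have hdet : ∀ y, (gram z fun k => s k y).det ≠ 0 := fun y =>
    (((Matrix.isUnit_iff_isUnit_det _).1 (hM y))).ne_zero
  -- s = M r, componentwise
  have hMr : ∀ y (k : Fin n) (a : Fin 2),
      s k y a = ∑ j, gram z (fun k' => s k' y) k j * r j y a := by
    intro y k a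
    have h := congr_fun (hr y k) a
    simp only [Pi.smul_apply, Finset.sum_apply, smul_eq_mul] at h
    have h2 : Complex.I * s k y a
        = Complex.I * ∑ j, gram z (fun k' => s k' y) k j * r j y a := by
      rw [h, Finset.mul_sum]
      refine Finset.sum_congr rfl fun j _ => ?_
      have hd := hden k j
      simp only [_root_.gram, Matrix.of_apply]
      field_simp
      ring_nf
      simp only [Complex.I_sq]
      ring
    exact mul_left_cancel₀ Complex.I_ne_zero h2
  -- explicit formula for r
  have hrex : ∀ y (j : Fin n) (a : Fin 2),
      r j y a = ((gram z fun k => s k y).det)⁻¹ *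
        ∑ k, (gram z fun k => s k y).adjugate j k * s k y a := by
    intro y j a
    have hmv : (gram z fun k => s k y).mulVec (fun j' => r j' y a) = fun k => s k y a := by
      funext k
      simp only [Matrix.mulVec, dotProduct]
      exact (hMr y k a).symm
    have h2 : ((gram z fun k => s k y).adjugate).mulVec (fun k => s k y a)
        = ((gram z fun k => s k y).det) • (fun j' => r j' y a) := by
      rw [← hmv, Matrix.mulVec_mulVec, Matrix.adjugate_mul, Matrix.smul_mulVec,
        Matrix.one_mulVec]
    have h3 := congr_fun h2 j
    simp only [Matrix.mulVec, dotProduct, Pi.smul_apply, smul_eq_mul] at h3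
    rw [inv_mul_eq_div, eq_div_iff (hdet y), mul_comm]
    exact h3.symm
  -- derivatives of s components
  have hsd : ∀ (k : Fin n) (a : Fin 2), HasDerivAt (fun y => s k y a)
      (![-(Complex.I*starRingEnd ℂ (z k))*s k x 0 + q₀ x*s k x 1,
        -(starRingEnd ℂ (q₀ x))*s k x 0 + Complex.I*starRingEnd ℂ (z k)*s k x 1] a) x := by
    intro k a
    have h := hasDerivAt_pi.1 (hs k x) a
    rwa [Ux_mulVec'] at h
  -- derivative of gram entries
  have hMd : ∀ (k j : Fin n), HasDerivAt (fun y => gram z (fun k' => s k' y) k j)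
      (-(starRingEnd ℂ (s j x 0) * s k x 0 - starRingEnd ℂ (s j x 1) * s k x 1)) x := by
    intro k j
    have hd := hden k j
    have hc0 : HasDerivAt (fun y => starRingEnd ℂ (s j y 0))
        (starRingEnd ℂ (-(Complex.I*starRingEnd ℂ (z j))*s j x 0 + q₀ x*s j x 1)) x := by
      simpa only [← starRingEnd_apply, Matrix.cons_val_zero, Matrix.cons_val_one,
        Matrix.head_cons] using (hsd j 0).star
    have hc1 : HasDerivAt (fun y => starRingEnd ℂ (s j y 1))
        (starRingEnd ℂ (-(starRingEnd ℂ (q₀ x))*s j x 0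
          + Complex.I*starRingEnd ℂ (z j)*s j x 1)) x := by
      simpa only [← starRingEnd_apply, Matrix.cons_val_zero, Matrix.cons_val_one,
        Matrix.head_cons] using (hsd j 1).star
    have h0k := hsd k 0
    have h1k := hsd k 1
    simp only [Matrix.cons_val_zero, Matrix.cons_val_one, Matrix.head_cons] at hc0 hc1 h0k h1k
    have hinner : HasDerivAt (fun y => inn (s j y) (s k y))
        ((starRingEnd ℂ (-(Complex.I*starRingEnd ℂ (z j))*s j x 0 + q₀ x*s j x 1)) * s k x 0
          + starRingEnd ℂ (s j x 0) * (-(Complex.I*starRingEnd ℂ (z k))*s k x 0 + q₀ x*s k x 1)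
          + ((starRingEnd ℂ (-(starRingEnd ℂ (q₀ x))*s j x 0
              + Complex.I*starRingEnd ℂ (z j)*s j x 1)) * s k x 1
            + starRingEnd ℂ (s j x 1) * (-(starRingEnd ℂ (q₀ x))*s k x 0
              + Complex.I*starRingEnd ℂ (z k)*s k x 1))) x := by
      simp only [inn]
      exact (hc0.mul h0k).add (hc1.mul h1k)
    have hfull := (hinner.const_mul (-Complex.I)).div_const (starRingEnd ℂ (z k) - z j)
    simp only [_root_.gram, Matrix.of_apply]
    convert hfull using 1
    · rfl
    simp only [map_add, _root_.map_mul, map_neg, Complex.conj_conj, Complex.conj_I, starRingEnd_self_apply]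
    field_simp
    ring_nf
    simp only [Complex.I_sq]
    ring
  have hMdiffAt : ∀ (k j : Fin n),
      DifferentiableAt ℝ (fun y => gram z (fun k' => s k' y) k j) x :=
    fun k j => (hMd k j).differentiableAt
  -- differentiability of r
  have hrdiff : ∀ (j : Fin n) (a : Fin 2), DifferentiableAt ℝ (fun y => r j y a) x := by
    intro j a
    have hfe : (fun y => r j y a) = fun y => ((gram z fun k => s k y).det)⁻¹ *
        ∑ k, (gram z fun k => s k y).adjugate j k * s k y a := funext fun y => hrex y j a
    rw [hfe]
    exact ((diffAt_det' hMdiffAt).inv (hdet x)).mul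
      (DifferentiableAt.fun_sum fun k _ =>
        (diffAt_adj' hMdiffAt j k).mul (hsd k a).differentiableAt)
  have hdr : ∀ (j : Fin n) (a : Fin 2), HasDerivAt (fun y => r j y a)
      (deriv (fun y => r j y a) x) x := fun j a => (hrdiff j a).hasDerivAt
  -- differentiate the Gram relation s = M r
  have hEq : ∀ (k : Fin n) (a : Fin 2),
      (![-(Complex.I*starRingEnd ℂ (z k))*s k x 0 + q₀ x*s k x 1,
        -(starRingEnd ℂ (q₀ x))*s k x 0 + Complex.I*starRingEnd ℂ (z k)*s k x 1] a)
      = ∑ j, (-(starRingEnd ℂ (s j x 0) * s k x 0 - starRingEnd ℂ (s j x 1) * s k x 1)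
            * r j x a
          + gram z (fun k' => s k' x) k j * deriv (fun y => r j y a) x) := by
    intro k a
    have hR : HasDerivAt (fun y => ∑ j, gram z (fun k' => s k' y) k j * r j y a)
        (∑ j, (-(starRingEnd ℂ (s j x 0) * s k x 0 - starRingEnd ℂ (s j x 1) * s k x 1)
            * r j x a
          + gram z (fun k' => s k' x) k j * deriv (fun y => r j y a) x)) x :=
      HasDerivAt.fun_sum fun j _ => (hMd k j).mul (hdr j a)
    have hfe : (fun y => s k y a) = fun y => ∑ j, gram z (fun k' => s k' y) k j * r j y a :=
      funext fun y => hMr y k a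
    have hL := hsd k a
    rw [hfe] at hL
    exact hL.unique hR
  -- the dressed potential in terms of r
  have hqT : q x = q₀ x - 2 * ∑ j, r j x 0 * starRingEnd ℂ (s j x 1) := by
    rw [hq x]
    simp only [dressQ, cof]
    have hinner : ∀ k : Fin n,
        ∑ j, (gram z fun k' => s k' x).adjugate k j * s j x 0 * starRingEnd ℂ (s k x 1)
        = (gram z fun k' => s k' x).det * (r k x 0 * starRingEnd ℂ (s k x 1)) := by
      intro k
      have h1 : ∑ j, (gram z fun k' => s k' x).adjugate k j * s j x 0
          = (gram z fun k' => s k' x).det * r k x 0 := by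
        rw [hrex x k 0, ← mul_assoc, mul_inv_cancel₀ (hdet x), one_mul]
      rw [← Finset.sum_mul, h1, mul_assoc]
    have hsum : (∑ k, ∑ j, (gram z fun k' => s k' x).adjugate k j * s j x 0
          * starRingEnd ℂ (s k x 1))
        = (gram z fun k' => s k' x).det * ∑ j, r j x 0 * starRingEnd ℂ (s j x 1) := by
      rw [Finset.mul_sum]
      exact Finset.sum_congr rfl fun k _ => hinner k
    rw [hsum]
    have hD := hdet x
    field_simp
  -- Hermitian symmetry
  have hH : (gram z fun k => s k x)ᴴ = gram z fun k => s k x := by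
    ext k j
    simp only [Matrix.conjTranspose_apply, _root_.gram, Matrix.of_apply, inn, ← starRingEnd_apply,
      map_div₀, map_add, _root_.map_mul, map_neg, map_sub, Complex.conj_conj, Complex.conj_I,
      starRingEnd_self_apply]
    rw [div_eq_div_iff (by
        intro hc
        apply hden k j
        linear_combination -hc) (hden k j)]
    ring
  have hDconj : starRingEnd ℂ ((gram z fun k => s k x).det) = (gram z fun k => s k x).det := by
    have h := Matrix.det_conjTranspose (gram z fun k => s k x)
    rw [hH] at h
    rw [starRingEnd_apply]
    exact h.symm
  have hAconj : ∀ j k : Fin n, starRingEnd ℂ ((gram z fun k => s k x).adjugate j k)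
      = (gram z fun k => s k x).adjugate k j := by
    have h := Matrix.adjugate_conjTranspose (gram z fun k => s k x)
    rw [hH] at h
    intro j k
    have h2 := congr_fun (congr_fun h k) j
    simp only [Matrix.conjTranspose_apply] at h2
    rw [starRingEnd_apply]
    exact h2
  -- T1 = conj T0
  have hT1 : ∑ j, r j x 1 * starRingEnd ℂ (s j x 0)
      = starRingEnd ℂ (∑ j, r j x 0 * starRingEnd ℂ (s j x 1)) := by
    rw [map_sum]
    have e1 : ∑ j, r j x 1 * starRingEnd ℂ (s j x 0)
        = ∑ j, ∑ k, ((gram z fun k' => s k' x).det)⁻¹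
            * (gram z fun k' => s k' x).adjugate j k * s k x 1 * starRingEnd ℂ (s j x 0) := by
      refine Finset.sum_congr rfl fun j _ => ?_
      rw [hrex x j 1, Finset.mul_sum, Finset.sum_mul]
      exact Finset.sum_congr rfl fun k _ => by ring
    have e2 : ∀ j : Fin n, starRingEnd ℂ (r j x 0 * starRingEnd ℂ (s j x 1))
        = ∑ k, ((gram z fun k' => s k' x).det)⁻¹
            * (gram z fun k' => s k' x).adjugate k j * starRingEnd ℂ (s k x 0) * s j x 1 := by
      intro j
      rw [hrex x j 0]
      simp only [_root_.map_mul, map_inv₀, map_sum, hDconj, Complex.conj_conj]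
      rw [Finset.mul_sum, Finset.sum_mul]
      refine Finset.sum_congr rfl fun k _ => ?_
      rw [hAconj j k]
      ring
    rw [e1, Finset.sum_congr rfl fun j _ => e2 j, Finset.sum_comm]
    exact Finset.sum_congr rfl fun j _ => Finset.sum_congr rfl fun k _ => by ring
  have hqTconj : starRingEnd ℂ (q x) = starRingEnd ℂ (q₀ x)
      - 2 * ∑ j, r j x 1 * starRingEnd ℂ (s j x 0) := by
    have h := congrArg (starRingEnd ℂ) hqT
    simp only [map_sub, _root_.map_mul, map_ofNat] at h
    rw [h, hT1]
  -- the per-component candidate identity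
  have hMc : ∀ (k : Fin n) (a : Fin 2),
      (∑ j, (-(starRingEnd ℂ (s j x 0) * s k x 0 - starRingEnd ℂ (s j x 1) * s k x 1))
          * r j x a)
        + ∑ j, gram z (fun k' => s k' x) k j *
          (![-(Complex.I*z j)*r j x 0 + q x*r j x 1,
             -(starRingEnd ℂ (q x))*r j x 0 + Complex.I*z j*r j x 1] a)
      = ![-(Complex.I*starRingEnd ℂ (z k))*s k x 0 + q₀ x*s k x 1,
         -(starRingEnd ℂ (q₀ x))*s k x 0 + Complex.I*starRingEnd ℂ (z k)*s k x 1] a := by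
    intro k a
    fin_cases a
    · simp only [Fin.zero_eta, Fin.mk_one, Matrix.cons_val_zero, Matrix.cons_val_one,
        Matrix.head_cons]
      have hsplit : ∑ j, gram z (fun k' => s k' x) k j *
            (-(Complex.I*z j)*r j x 0 + q x*r j x 1)
          = (-(Complex.I*starRingEnd ℂ (z k))) * (∑ j, gram z (fun k' => s k' x) k j * r j x 0)
            + q x * (∑ j, gram z (fun k' => s k' x) k j * r j x 1)
            + ∑ j, (starRingEnd ℂ (s j x 0) * s k x 0 + starRingEnd ℂ (s j x 1) * s k x 1)
                * r j x 0 := by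
        rw [Finset.mul_sum, Finset.mul_sum, ← Finset.sum_add_distrib, ← Finset.sum_add_distrib]
        refine Finset.sum_congr rfl fun j _ => ?_
        simp only [_root_.gram, Matrix.of_apply, inn]
        have hd := hden k j
        field_simp
        ring_nf
        simp only [Complex.I_sq]
        ring
      have hT0s : (∑ j, (-(starRingEnd ℂ (s j x 0) * s k x 0
              - starRingEnd ℂ (s j x 1) * s k x 1)) * r j x 0)
            + ∑ j, (starRingEnd ℂ (s j x 0) * s k x 0 + starRingEnd ℂ (s j x 1) * s k x 1)
                * r j x 0
          = 2 * s k x 1 * ∑ j, r j x 0 * starRingEnd ℂ (s j x 1) := by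
        rw [← Finset.sum_add_distrib, Finset.mul_sum]
        exact Finset.sum_congr rfl fun j _ => by ring
      linear_combination hsplit + hT0s + (Complex.I*starRingEnd ℂ (z k))*(hMr x k 0)
        - q x*(hMr x k 1) + (s k x 1)*hqT
    · simp only [Fin.zero_eta, Fin.mk_one, Matrix.cons_val_zero, Matrix.cons_val_one,
        Matrix.head_cons]
      have hsplit : ∑ j, gram z (fun k' => s k' x) k j *
            (-(starRingEnd ℂ (q x))*r j x 0 + Complex.I*z j*r j x 1)
          = (-(starRingEnd ℂ (q x))) * (∑ j, gram z (fun k' => s k' x) k j * r j x 0)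
            + (Complex.I*starRingEnd ℂ (z k)) * (∑ j, gram z (fun k' => s k' x) k j * r j x 1)
            - ∑ j, (starRingEnd ℂ (s j x 0) * s k x 0 + starRingEnd ℂ (s j x 1) * s k x 1)
                * r j x 1 := by
        rw [Finset.mul_sum, Finset.mul_sum, ← Finset.sum_add_distrib, ← Finset.sum_sub_distrib]
        refine Finset.sum_congr rfl fun j _ => ?_
        simp only [_root_.gram, Matrix.of_apply, inn]
        have hd := hden k j
        field_simp
        ring_nf
        simp only [Complex.I_sq]
        ring
      have hT1s : (∑ j, (-(starRingEnd ℂ (s j x 0) * s k x 0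
              - starRingEnd ℂ (s j x 1) * s k x 1)) * r j x 1)
            - ∑ j, (starRingEnd ℂ (s j x 0) * s k x 0 + starRingEnd ℂ (s j x 1) * s k x 1)
                * r j x 1
          = -2 * s k x 0 * ∑ j, r j x 1 * starRingEnd ℂ (s j x 0) := by
        rw [← Finset.sum_sub_distrib, Finset.mul_sum]
        exact Finset.sum_congr rfl fun j _ => by ring
      linear_combination hsplit + hT1s + (starRingEnd ℂ (q x))*(hMr x k 0)
        - (Complex.I*starRingEnd ℂ (z k))*(hMr x k 1) - (s k x 0)*hqTconj
  -- the derivative of r equals the dressed ODE right-hand side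
  have hdrc : ∀ (j : Fin n) (a : Fin 2), deriv (fun y => r j y a) x
      = ![-(Complex.I*z j)*r j x 0 + q x*r j x 1,
         -(starRingEnd ℂ (q x))*r j x 0 + Complex.I*z j*r j x 1] a := by
    intro j a
    have hu : (gram z fun k => s k x).mulVec
        (fun j' => deriv (fun y => r j' y a) x
          - ![-(Complex.I*z j')*r j' x 0 + q x*r j' x 1,
             -(starRingEnd ℂ (q x))*r j' x 0 + Complex.I*z j'*r j' x 1] a) = 0 := by
      funext k
      simp only [Matrix.mulVec, dotProduct, mul_sub, Pi.zero_apply]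
      rw [Finset.sum_sub_distrib]
      have h1 := hEq k a
      rw [Finset.sum_add_distrib] at h1
      linear_combination -h1 - hMc k a
    have h2 := congrArg (fun v => ((gram z fun k => s k x))⁻¹.mulVec v) hu
    simp only [Matrix.mulVec_mulVec,
      Matrix.nonsing_inv_mul _ ((Matrix.isUnit_iff_isUnit_det _).1 (hM x)),
      Matrix.one_mulVec, Matrix.mulVec_zero] at h2
    have h3 := congr_fun h2 j
    simp only [Pi.zero_apply] at h3
    exact sub_eq_zero.1 h3
  -- repackaged derivatives
  have hrd2 : ∀ (k : Fin n) (a : Fin 2), HasDerivAt (fun y => r k y a)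
      (![-(Complex.I*z k)*r k x 0 + q x*r k x 1,
         -(starRingEnd ℂ (q x))*r k x 0 + Complex.I*z k*r k x 1] a) x := by
    intro k a
    rw [← hdrc k a]
    exact hdr k a
  have hsc : ∀ (k : Fin n) (b : Fin 2), HasDerivAt (fun y => starRingEnd ℂ (s k y b))
      (starRingEnd ℂ (![-(Complex.I*starRingEnd ℂ (z k))*s k x 0 + q₀ x*s k x 1,
        -(starRingEnd ℂ (q₀ x))*s k x 0 + Complex.I*starRingEnd ℂ (z k)*s k x 1] b)) x :=
    fun k b => by simpa only [← starRingEnd_apply] using (hsd k b).star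
  -- the key pole-cancellation identity
  have KEY : ∀ a b : Fin 2,
      (∑ k, (Complex.I / (w - z k) *
          ((![-(Complex.I*z k)*r k x 0 + q x*r k x 1,
              -(starRingEnd ℂ (q x))*r k x 0 + Complex.I*z k*r k x 1] a)
            * starRingEnd ℂ (s k x b)
          + r k x a * starRingEnd ℂ
              (![-(Complex.I*starRingEnd ℂ (z k))*s k x 0 + q₀ x*s k x 1,
                 -(starRingEnd ℂ (q₀ x))*s k x 0
                   + Complex.I*starRingEnd ℂ (z k)*s k x 1] b))))
        + (∑ k, Complex.I / (w - z k) * (r k x a * starRingEnd ℂ (s k x 0)))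
            * Ux w (q₀ x) 0 b
        + (∑ k, Complex.I / (w - z k) * (r k x a * starRingEnd ℂ (s k x 1)))
            * Ux w (q₀ x) 1 b
        - Ux w (q x) a 0 * (∑ k, Complex.I / (w - z k) * (r k x 0 * starRingEnd ℂ (s k x b)))
        - Ux w (q x) a 1 * (∑ k, Complex.I / (w - z k) * (r k x 1 * starRingEnd ℂ (s k x b)))
      = ((![1,-1] : Fin 2 → ℂ) b - (![1,-1] : Fin 2 → ℂ) a)
          * ∑ k, r k x a * starRingEnd ℂ (s k x b) := by
    intro a b
    rw [Finset.sum_mul, Finset.sum_mul, Finset.mul_sum, Finset.mul_sum, Finset.mul_sum,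
      ← Finset.sum_add_distrib, ← Finset.sum_add_distrib, ← Finset.sum_sub_distrib,
      ← Finset.sum_sub_distrib]
    refine Finset.sum_congr rfl fun k _ => ?_
    have hwk := hwz k
    fin_cases a <;> fin_cases b <;>
      simp only [Fin.zero_eta, Fin.mk_one, Fin.isValue, Matrix.cons_val_zero,
        Matrix.cons_val_one, Matrix.head_cons, Ux_apply', Matrix.of_apply,
        Matrix.cons_val', Matrix.empty_val', Matrix.cons_val_fin_one,
        map_add, _root_.map_mul, map_neg, Complex.conj_conj, Complex.conj_I,
        starRingEnd_self_apply] <;>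
      field_simp <;>
      ring_nf <;>
      simp only [Complex.I_sq] <;>
      ring_nf
  -- rewrite φ entrywise
  have hφfun : (fun y => φ y ii jj) = fun y => ∑ l, ((if ii = l then (1:ℂ) else 0)
      + ∑ k, Complex.I / (w - z k) * (r k y ii * starRingEnd ℂ (s k y l))) * φ₀ y l jj := by
    funext y
    rw [hφdef y]
    simp only [Matrix.mul_apply, Matrix.add_apply, Matrix.one_apply, Matrix.sum_apply,
      Matrix.smul_apply, outer, Matrix.of_apply, smul_eq_mul]
  rw [hφfun]
  have hD : HasDerivAt (fun y => ∑ l, ((if ii = l then (1:ℂ) else 0)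
        + ∑ k, Complex.I / (w - z k) * (r k y ii * starRingEnd ℂ (s k y l))) * φ₀ y l jj)
      (∑ l, ((0 + ∑ k, Complex.I / (w - z k) *
          ((![-(Complex.I*z k)*r k x 0 + q x*r k x 1,
              -(starRingEnd ℂ (q x))*r k x 0 + Complex.I*z k*r k x 1] ii)
            * starRingEnd ℂ (s k x l)
          + r k x ii * starRingEnd ℂ
              (![-(Complex.I*starRingEnd ℂ (z k))*s k x 0 + q₀ x*s k x 1,
                 -(starRingEnd ℂ (q₀ x))*s k x 0
                   + Complex.I*starRingEnd ℂ (z k)*s k x 1] l)))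
          * φ₀ x l jj
        + ((if ii = l then (1:ℂ) else 0)
            + ∑ k, Complex.I / (w - z k) * (r k x ii * starRingEnd ℂ (s k x l)))
          * (Ux w (q₀ x) * φ₀ x) l jj)) x := by
    refine HasDerivAt.fun_sum fun l _ => ?_
    exact ((hasDerivAt_const x _).add (HasDerivAt.fun_sum fun k _ =>
      HasDerivAt.const_mul (Complex.I / (w - z k))
        ((hrd2 k ii).mul (hsc k l)))).mul (hφ₀ x l jj)
  convert hD using 1
  have K0 := KEY ii 0
  have K1 := KEY ii 1
  rw [hφdef x]
  simp only [Matrix.mul_apply, Matrix.add_apply, Matrix.one_apply, Matrix.sum_apply,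
    Matrix.smul_apply, outer, Matrix.of_apply, smul_eq_mul, Fin.sum_univ_two]
  fin_cases ii
  · simp only [Fin.zero_eta, Fin.isValue, Matrix.cons_val_zero, Matrix.cons_val_one,
      Matrix.head_cons, Ux_apply', Matrix.of_apply, Matrix.cons_val', Matrix.empty_val',
      Matrix.cons_val_fin_one, Matrix.vecHead, if_true, if_false, one_ne_zero, zero_ne_one,
      reduceIte] at K0 K1 ⊢
    linear_combination (-(φ₀ x 0 jj)) * K0 + (-(φ₀ x 1 jj)) * K1 + φ₀ x 1 jj * hqT
  · simp only [Fin.mk_one, Fin.isValue, Matrix.cons_val_zero, Matrix.cons_val_one,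
      Matrix.head_cons, Ux_apply', Matrix.of_apply, Matrix.cons_val', Matrix.empty_val',
      Matrix.cons_val_fin_one, Matrix.vecHead, if_true, if_false, one_ne_zero, zero_ne_one,
      reduceIte] at K0 K1 ⊢
    linear_combination (-(φ₀ x 0 jj)) * K0 + (-(φ₀ x 1 jj)) * K1 - φ₀ x 0 jj * hqTconj
end
end
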